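/- Every connected cograph on at least two vertices is the join of two nonempty cographs. Equivalently, if G is a cograph on n ≥ 2 vertices and G is connected, then V(G) can be partitioned into nonempty sets A and B such that every vertex of A is adjacent to every vertex of B. -/

import Mathlib

open SimpleGraph

/-- The join (product) of two graphs: disjoint union plus all cross edges. -/
def gJoin {α β : Type*} (G : SimpleGraph α) (H : SimpleGraph β) : SimpleGraph (α ⊕ β) where
  Adj u v := match u, v with
    | Sum.inl a, Sum.inl b => G.Adj a b
    | Sum.inr a, Sum.inr b => H.Adj a b
    | _, _ => True
  symm := ⟨by rintro (a|a) (b|b) h <;> simp_all <;> exact h.symm⟩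
  loopless := ⟨by
    rintro (a|a) h
    · exact G.loopless.irrefl a h
    · exact H.loopless.irrefl a h⟩

/-- `H` is contained in `G` as a (not necessarily induced) subgraph. -/
def Contains {β α : Type*} (H : SimpleGraph β) (G : SimpleGraph α) : Prop :=
  ∃ f : H →g G, Function.Injective f

/-- The complete bipartite graph `K_{s,t}`. -/
def KBip (s t : ℕ) : SimpleGraph (Fin s ⊕ Fin t) := completeBipartiteGraph (Fin s) (Fin t)

/-- A cograph: a graph with no induced path on four vertices. -/
def IsCograph {α : Type*} (G : SimpleGraph α) : Prop :=
  IsEmpty (pathGraph 4 ↪g G)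


lemma p4_embed {V : Type*} (G : SimpleGraph V) (a b c d : V)
    (hab : G.Adj a b) (hbc : G.Adj b c) (hcd : G.Adj c d)
    (hac : ¬G.Adj a c) (had : ¬G.Adj a d) (hbd : ¬G.Adj b d)
    (nac : a ≠ c) (nad : a ≠ d) (nbd : b ≠ d) : Nonempty (pathGraph 4 ↪g G) := by
  have hca : ¬G.Adj c a := fun h => hac h.symm
  have hda : ¬G.Adj d a := fun h => had h.symm
  have hdb : ¬G.Adj d b := fun h => hbd h.symm
  refine ⟨⟨⟨![a,b,c,d], ?_⟩, ?_⟩⟩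
  · intro i j hij
    fin_cases i <;> fin_cases j <;> simp_all <;>
      first
        | rfl
        | exact absurd hij hab.ne
        | exact absurd hij.symm hab.ne
        | exact absurd hij hbc.ne
        | exact absurd hij.symm hbc.ne
        | exact absurd hij hcd.ne
        | exact absurd hij.symm hcd.ne
        | exact absurd hij nac
        | exact absurd hij.symm nac
        | exact absurd hij nad
        | exact absurd hij.symm nad
        | exact absurd hij nbd
        | exact absurd hij.symm nbd
  · intro i j
    change G.Adj (![a,b,c,d] i) (![a,b,c,d] j) ↔ _
    fin_cases i <;> fin_cases j <;>
      simp [pathGraph_adj, show ((3:Fin 4):ℕ) = 3 from rfl, hab, hbc, hcd,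
        hab.symm, hbc.symm, hcd.symm, hac, had, hbd, hca, hda, hdb, G.irrefl]


/-- Embeddings lift to complements. -/
def Embedding.complMap {α β : Type*} {H : SimpleGraph α} {K : SimpleGraph β}
    (f : H ↪g K) : Hᶜ ↪g Kᶜ where
  toEmbedding := f.toEmbedding
  map_rel_iff' := by
    intro a b
    simp [compl_adj, f.map_rel_iff, f.injective.ne_iff]

def p4ComplIso : pathGraph 4 ≃g (pathGraph 4)ᶜ where
  toEquiv := Equiv.mk (![1,3,0,2] : Fin 4 → Fin 4) ![2,0,3,1] (by decide) (by decide)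
  map_rel_iff' := by
    intro a b
    fin_cases a <;> fin_cases b <;>
      simp [pathGraph_adj, compl_adj, show ((3:Fin 4):ℕ) = 3 from rfl] <;> decide

lemma isCograph_compl {α : Type*} {G : SimpleGraph α} (h : IsCograph G) :
    IsCograph Gᶜ := by
  constructor
  intro f
  have f2 : (pathGraph 4)ᶜ ↪g Gᶜᶜ := Embedding.complMap f
  rw [compl_compl] at f2
  exact h.false ((f2.comp p4ComplIso.toEmbedding))

section cut
variable {V : Type*} (G : SimpleGraph V) (v : V)

/-- helper: if G is connected and T is a vertex ≠ v, there is a neighbor X of v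
    that reaches T in the graph with v deleted. -/
lemma nbr_reaching (hconn : G.Connected) (T : {x : V // x ≠ v}) :
    ∃ X : {x : V // x ≠ v}, G.Adj v ↑X ∧ (G.induce {x | x ≠ v}).Reachable X T := by
  obtain ⟨p⟩ := hconn ↑T v
  set S : Set V := {x | ∃ h : x ≠ v, (G.induce {x | x ≠ v}).Reachable ⟨x, h⟩ T} with hS
  have hTS : (↑T : V) ∈ S := ⟨T.2, by rcases T with ⟨t, ht⟩; exact Reachable.refl _⟩
  have hvS : v ∉ S := fun ⟨h, _⟩ => h rfl
  obtain ⟨d, hd, hfst, hsnd⟩ := p.exists_boundary_dart S hTS hvS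
  have hadj : G.Adj d.fst d.snd := d.adj
  obtain ⟨hfne, hreach⟩ := hfst
  by_cases hdv : d.snd = v
  · exact ⟨⟨d.fst, hfne⟩, by rw [hdv] at hadj; exact hadj.symm, hreach⟩
  · exfalso
    apply hsnd
    refine ⟨hdv, Reachable.trans (Adj.reachable ?_) hreach⟩
    exact hadj.symm
end cut

lemma p4_of_cut {V : Type*} (G : SimpleGraph V) (v : V) (hconn : G.Connected)
    (w : V) (hwv : w ≠ v) (hvw : ¬G.Adj v w)
    (hdis : ¬(G.induce {x | x ≠ v}).Connected) : Nonempty (pathGraph 4 ↪g G) := by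
  classical
  set s : Set V := {x | x ≠ v} with hs
  set G' := G.induce s with hG'
  have hne : Nonempty ↥s := ⟨⟨w, hwv⟩⟩
  rw [connected_iff] at hdis
  push_neg at hdis
  have hpre : ¬G'.Preconnected := fun h => (hdis h).false hne.some
  rw [Preconnected] at hpre
  push_neg at hpre
  obtain ⟨A, B, hAB⟩ := hpre
  set W : ↥s := ⟨w, hwv⟩ with hW
  -- find T not reaching W
  have hT : ∃ T : ↥s, ¬G'.Reachable T W := by
    by_cases h1 : G'.Reachable A W
    · by_cases h2 : G'.Reachable B W
      · exact absurd (h1.trans h2.symm) hAB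
      · exact ⟨B, h2⟩
    · exact ⟨A, h1⟩
  obtain ⟨T, hTW⟩ := hT
  obtain ⟨Y, hvY, hYT⟩ := nbr_reaching G v hconn T
  have hYW : ¬G'.Reachable Y W := fun h => hTW (hYT.symm.trans h)
  obtain ⟨X0, hvX0, hX0W⟩ := nbr_reaching G v hconn W
  -- walk from X0 to W in G', boundary dart wrt neighbors of v
  obtain ⟨q⟩ := hX0W
  set Q : Set ↥s := {x | G.Adj v ↑x} with hQ
  obtain ⟨d, hd, hfst, hsnd⟩ := q.exists_boundary_dart Q hvX0 hvw
  have hXW : G'.Reachable d.fst W := by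
    have := SimpleGraph.Walk.dart_fst_mem_support_of_mem_darts q hd
    exact ⟨q.dropUntil _ this⟩
  have hZW : G'.Reachable d.snd W := by
    have := SimpleGraph.Walk.dart_snd_mem_support_of_mem_darts q hd
    exact ⟨q.dropUntil _ this⟩
  have hXZ : G.Adj ↑d.fst ↑d.snd := d.adj
  -- assemble P4 : Y - v - X - Z
  refine p4_embed G ↑Y v ↑d.fst ↑d.snd hvY.symm hfst hXZ ?_ ?_ hsnd ?_ ?_ ?_
  · intro h
    exact hYW ((Adj.reachable (by exact h : G'.Adj Y d.fst)).trans hXW)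
  · intro h
    exact hYW ((Adj.reachable (by exact h : G'.Adj Y d.snd)).trans hZW)
  · intro h
    exact hYW ((Subtype.ext h) ▸ hXW)
  · intro h
    exact hYW ((Subtype.ext h) ▸ hZW)
  · exact fun h => d.snd.2 h.symm

lemma exists_adj_of_reachable {V : Type*} {G : SimpleGraph V} {x y : V}
    (h : G.Reachable x y) (hxy : x ≠ y) : ∃ z, G.Adj x z := by
  obtain ⟨p⟩ := h
  cases p with
  | nil => exact absurd rfl hxy
  | cons h _ => exact ⟨_, h⟩

lemma induce_compl_eq {V : Type*} (G : SimpleGraph V) (s : Set V) :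
    (G.induce s)ᶜ = Gᶜ.induce s := by
  ext a b
  simp [compl_adj, Subtype.ext_iff]

universe u

lemma key : ∀ n : ℕ, ∀ {V : Type u} [Fintype V] (G : SimpleGraph V),
    Fintype.card V = n → 2 ≤ n → IsCograph G → G.Connected → Gᶜ.Connected → False := by
  intro n
  induction n using Nat.strong_induction_on with
  | _ n IH =>
  intro V _ G hcard hn hcog hc hcc
  classical
  have hnt : Nontrivial V := Fintype.one_lt_card_iff_nontrivial.mp (by omega)
  by_cases h2 : n = 2
  · -- base case
    rw [h2] at hcard
    have h2' : Nat.card V = 2 := by rw [Nat.card_eq_fintype_card]; exact hcard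
    obtain ⟨x, y, hxy, huniv⟩ := Nat.card_eq_two_iff.mp h2'
    have hmem : ∀ z : V, z = x ∨ z = y := by
      intro z
      have : z ∈ ({x, y} : Set V) := by rw [huniv]; trivial
      simpa using this
    have hadj : G.Adj x y := by
      obtain ⟨z, hz⟩ := exists_adj_of_reachable (hc x y) hxy
      rcases hmem z with h | h
      · exact absurd (h ▸ hz) (G.irrefl)
      · exact h ▸ hz
    have hadj' : Gᶜ.Adj x y := by
      obtain ⟨z, hz⟩ := exists_adj_of_reachable (hcc x y) hxy
      rcases hmem z with h | h
      · exact absurd (h ▸ hz) (Gᶜ.irrefl)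
      · exact h ▸ hz
    exact hadj'.2 hadj
  · have h3 : 3 ≤ n := by omega
    obtain ⟨v⟩ := hc.nonempty
    set s : Set V := {x | x ≠ v} with hs
    have hcards : Fintype.card ↥s = n - 1 := by
      have : Fintype.card ↥s = Fintype.card V - 1 := Set.card_ne_eq v
      omega
    have hcog' : IsCograph (G.induce s) :=
      ⟨fun f => hcog.false ((Embedding.induce s).comp f)⟩
    by_cases hc1 : (G.induce s).Connected
    · by_cases hc2 : ((Gᶜ).induce s).Connected
      · exact IH (n-1) (by omega) (G.induce s) hcards (by omega) hcog' hc1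
          (by rw [induce_compl_eq]; exact hc2)
      · -- apply p4_of_cut to Gᶜ
        obtain ⟨u, hu⟩ := exists_ne v
        obtain ⟨z, hz⟩ := exists_adj_of_reachable (hc v u) (Ne.symm hu)
        have hnadj : ¬Gᶜ.Adj v z := fun h => h.2 hz
        have := p4_of_cut Gᶜ v hcc z (Ne.symm hz.ne) hnadj hc2
        exact (isCograph_compl hcog).false this.some
    · -- apply p4_of_cut to G
      obtain ⟨u, hu⟩ := exists_ne v
      obtain ⟨z, hz⟩ := exists_adj_of_reachable (hcc v u) (Ne.symm hu)
      have := p4_of_cut G v hc z (Ne.symm hz.1) hz.2 hc1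
      exact hcog.false this.some


theorem connected_cograph_is_join {V : Type*} [Fintype V] (G : SimpleGraph V)
    (hcard : 2 ≤ Fintype.card V) (hG : IsCograph G) (hconn : G.Connected) :
    ∃ A B : Set V, A.Nonempty ∧ B.Nonempty ∧ Disjoint A B ∧ A ∪ B = Set.univ ∧
      ∀ a ∈ A, ∀ b ∈ B, G.Adj a b := by
  have hkey : ¬Gᶜ.Connected := fun h =>
    key (Fintype.card V) G rfl hcard hG hconn h
  have hne : Nonempty V := hconn.nonempty
  rw [connected_iff] at hkey
  push_neg at hkey
  have hpre : ¬Gᶜ.Preconnected := fun h => (hkey h).false hne.some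
  rw [Preconnected] at hpre
  push_neg at hpre
  obtain ⟨a, b, hab⟩ := hpre
  refine ⟨{x | Gᶜ.Reachable a x}, {x | Gᶜ.Reachable a x}ᶜ, ⟨a, Reachable.refl a⟩,
    ⟨b, hab⟩, disjoint_compl_right, Set.union_compl_self _, ?_⟩
  intro x hx y hy
  have hxy : x ≠ y := fun h => hy (h ▸ hx)
  by_contra hadj
  exact hy (hx.trans (Adj.reachable ⟨hxy, hadj⟩))
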